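/- If the optimal value of the inner problem min ∑_l (δ_l^+ − δ_l^−) over feasible (F, δ^+, δ^−) is strictly negative, then the new iterate satisfies strict descent: ∑_{l=1}^k TV(F_l^{t+1})/S(F_l^{t+1}) < ∑_{l=1}^k TV(F_l^t)/S(F_l^t); and the point (F^t, δ^+=0, δ^−=0) is always feasible for the inner problem, so the optimal value is ≤ 0. -/

import Mathlib

open Finset

/-- Feasibility for the inner convex problem of the descent method. -/
def InnerFeasible {n k : ℕ} (TV : (Fin n → ℝ) → ℝ)
    (lam : Fin k → ℝ) (s : Fin k → Fin n → ℝ) (m M : ℝ)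
    (L : Finset (Fin n × Fin k))
    (F : Fin k → Fin n → ℝ) (dp dm : Fin k → ℝ) : Prop :=
  (∀ l, TV (F l) ≤ lam l * (∑ i, s l i * F l i) + m * dp l - M * dm l) ∧
  (∀ l, 0 ≤ dp l) ∧ (∀ l, 0 ≤ dm l) ∧
  (∀ i l, 0 ≤ F l i) ∧ (∀ i, ∑ l, F l i = 1) ∧
  (∀ p ∈ L, F p.2 p.1 = 1) ∧
  (∀ l, m ≤ ∑ i, s l i * F l i)

/-- If the optimal value of the inner problem is strictly negative, the new
iterate strictly decreases the sum of ratios; moreover the previous iterate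
(F^t, 0, 0) is feasible for the inner problem (so the optimal value is ≤ 0). -/
theorem inner_problem_descent {n k : ℕ}
    (TV S : (Fin n → ℝ) → ℝ) (hTV : ∀ f, 0 ≤ TV f)
    (m M : ℝ) (hm : 0 < m) (hM : 0 < M)
    (L : Finset (Fin n × Fin k))
    (Ft : Fin k → Fin n → ℝ) (s : Fin k → Fin n → ℝ)
    (lam : Fin k → ℝ) (hlam : ∀ l, lam l = TV (Ft l) / S (Ft l))
    (hgrad : ∀ l, ∑ i, s l i * Ft l i = S (Ft l))
    (hsub : ∀ l f, ∑ i, s l i * f i ≤ S f)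
    (hStm : ∀ l, m ≤ S (Ft l))
    (hFtpos : ∀ i l, 0 ≤ Ft l i) (hFtsum : ∀ i, ∑ l, Ft l i = 1)
    (hFtlab : ∀ p ∈ L, Ft p.2 p.1 = 1)
    (hbound : ∀ F dp dm, InnerFeasible TV lam s m M L F dp dm →
      ∀ l : Fin k, m ≤ S (F l) ∧ S (F l) ≤ M) :
    InnerFeasible TV lam s m M L Ft (fun _ => 0) (fun _ => 0) ∧
    (∀ F dp dm, InnerFeasible TV lam s m M L F dp dm →
      (∑ l, (dp l - dm l)) < 0 →
      (∑ l, TV (F l) / S (F l)) < ∑ l, TV (Ft l) / S (Ft l)) := by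

  have hfeas0 : InnerFeasible TV lam s m M L Ft (fun _ => 0) (fun _ => 0) := by
    refine ⟨?_, fun l => le_refl 0, fun l => le_refl 0, hFtpos, hFtsum, hFtlab, ?_⟩
    · intro l
      have hS : (0:ℝ) < S (Ft l) := lt_of_lt_of_le hm (hStm l)
      rw [hgrad l, hlam l]
      field_simp
      simp
    · intro l; rw [hgrad l]; exact hStm l
  refine ⟨hfeas0, ?_⟩
  intro F dp dm hF hneg
  have h1 := hF.1
  have hdp := hF.2.1
  have hdm := hF.2.2.1
  have hkey : ∀ l, TV (F l) / S (F l) ≤ lam l + (dp l - dm l) := by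
    intro l
    obtain ⟨hSm, hSM⟩ := hbound F dp dm hF l
    have hS : (0:ℝ) < S (F l) := lt_of_lt_of_le hm hSm
    have hlamnn : 0 ≤ lam l := by
      rw [hlam l]
      exact div_nonneg (hTV _) (le_of_lt (lt_of_lt_of_le hm (hStm l)))
    have h2 : TV (F l) ≤ S (F l) * (lam l + (dp l - dm l)) := by
      have h3 : lam l * (∑ i, s l i * F l i) ≤ lam l * S (F l) :=
        mul_le_mul_of_nonneg_left (hsub l (F l)) hlamnn
      have h4 : m * dp l ≤ S (F l) * dp l := mul_le_mul_of_nonneg_right hSm (hdp l)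
      have h5 : S (F l) * dm l ≤ M * dm l := mul_le_mul_of_nonneg_right hSM (hdm l)
      calc TV (F l) ≤ lam l * (∑ i, s l i * F l i) + m * dp l - M * dm l := h1 l
        _ ≤ lam l * S (F l) + S (F l) * dp l - S (F l) * dm l := by linarith
        _ = S (F l) * (lam l + (dp l - dm l)) := by ring
    rw [div_le_iff₀ hS]
    linarith [h2]
  calc (∑ l, TV (F l) / S (F l)) ≤ ∑ l, (lam l + (dp l - dm l)) :=
        Finset.sum_le_sum fun l _ => hkey l
    _ = (∑ l, lam l) + ∑ l, (dp l - dm l) := Finset.sum_add_distrib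
    _ < ∑ l, lam l := by linarith
    _ = ∑ l, TV (Ft l) / S (Ft l) := Finset.sum_congr rfl fun l _ => hlam l
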